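/- arXiv:2001.10333 — 4 statements merged into one kernel-verified Lean document; each statement's English description precedes it below -/
import Mathlib

section
/- Let 𝔎 = (K, R, ⋆, {0}) be a frame whose identity set is the singleton {0}. Then 𝔎 is a CR-frame satisfying (left reflection) if and only if Cm(𝔎) is a dense commutative relation algebra. -/
/-- Composition in the complex algebra of a frame. -/
def scomp {K : Type*} (R : K → K → K → Prop) (X Y : Set K) : Set K :=
  {z | ∃ x ∈ X, ∃ y ∈ Y, R x y z}

/-- Converse in the complex algebra of a frame. -/
def sconv {K : Type*} (s : K → K) (X : Set K) : Set K := s '' X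

/-- The complex algebra of the frame `(K, R, ⋆, I)` is a relation algebra. -/
def CmRA {K : Type*} (R : K → K → K → Prop) (s : K → K) (I : Set K) : Prop :=
  (∀ X Y Z : Set K, scomp R (X ∪ Y) Z = scomp R X Z ∪ scomp R Y Z) ∧
  (∀ X : Set K, scomp R X I = X) ∧
  (∀ X : Set K, sconv s (sconv s X) = X) ∧
  (∀ X Y : Set K, sconv s (X ∪ Y) = sconv s X ∪ sconv s Y) ∧
  (∀ X Y : Set K, sconv s (scomp R X Y) = scomp R (sconv s Y) (sconv s X)) ∧
  (∀ X Y : Set K, scomp R (sconv s X) (scomp R X Y)ᶜ ⊆ Yᶜ) ∧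
  (∀ X Y Z : Set K, scomp R X (scomp R Y Z) = scomp R (scomp R X Y) Z)

/-- `(K, R, ⋆, {z0})` is a CR-frame: postulates p1–p5 of Meyer and Routley. -/
def CRFrame {K : Type*} (R : K → K → K → Prop) (s : K → K) (z0 : K) : Prop :=
  (∀ a b : K, R z0 a b ↔ a = b) ∧
  (∀ a b c d : K, (∃ x, R a b x ∧ R x c d) ↔ (∃ y, R a c y ∧ R y b d)) ∧
  (∀ a : K, R a a a) ∧
  (∀ a : K, s (s a) = a) ∧
  (∀ a b c : K, R a b c ↔ R a (s c) (s b))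

/-- Frame condition (left reflection). -/
def LeftRefl {K : Type*} (R : K → K → K → Prop) (s : K → K) : Prop :=
  ∀ x y z, R x y z → R (s x) z y

/-- Theorem thm8a(i): a frame with identity set `{z0}` is a CR-frame satisfying
(left reflection) iff its complex algebra is a dense commutative relation algebra. -/
theorem crframe_iff_dense_comm_RA {K : Type*} (R : K → K → K → Prop)
    (s : K → K) (z0 : K) :
    (CRFrame R s z0 ∧ LeftRefl R s) ↔
      (CmRA R s ({z0} : Set K) ∧
        (∀ X : Set K, X ⊆ scomp R X X) ∧
        (∀ X Y : Set K, scomp R X Y = scomp R Y X)) := by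
  have memScomp : ∀ (X Y : Set K) z, z ∈ scomp R X Y ↔ ∃ x ∈ X, ∃ y ∈ Y, R x y z := by
    intro X Y z; rfl
  have memSingle : ∀ (a b z : K), z ∈ scomp R {a} {b} ↔ R a b z := by
    intro a b z; simp [scomp]
  have sconvSingle : ∀ a : K, sconv s ({a} : Set K) = {s a} := by
    intro a; simp [sconv]
  constructor
  · rintro ⟨⟨p1, p2, p3, p4, p5⟩, lr⟩
    -- pointwise commutativity
    have comm : ∀ a b c : K, R a b c ↔ R b a c := by
      intro a b c
      constructor
      · intro h
        obtain ⟨y, hy1, hy2⟩ := (p2 z0 a b c).mp ⟨a, (p1 a a).mpr rfl, h⟩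
        rwa [← (p1 b y).mp hy1] at hy2
      · intro h
        obtain ⟨y, hy1, hy2⟩ := (p2 z0 b a c).mp ⟨b, (p1 b b).mpr rfl, h⟩
        rwa [← (p1 a y).mp hy1] at hy2
    have conv1 : ∀ a b c : K, R a b c → R (s a) (s b) (s c) := by
      intro a b c h
      exact lr a (s c) (s b) ((p5 a b c).mp h)
    have convIff : ∀ a b c : K, R a b c ↔ R (s b) (s a) (s c) := by
      intro a b c
      constructor
      · intro h; exact conv1 b a c ((comm a b c).mp h)
      · intro h
        have := conv1 (s b) (s a) (s c) h
        rw [p4, p4, p4] at this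
        exact (comm b a c).mp this
    have peirce : ∀ a w b : K, R (s a) w b → R a b w := by
      intro a w b h
      have := lr (s a) w b h
      rwa [p4] at this
    have rid : ∀ a b : K, R a z0 b ↔ a = b := by
      intro a b; rw [comm a z0 b]; exact p1 a b
    refine ⟨⟨?_, ?_, ?_, ?_, ?_, ?_, ?_⟩, ?_, ?_⟩
    · intro X Y Z
      ext z
      simp only [memScomp, Set.mem_union]
      constructor
      · rintro ⟨x, hx | hx, y, hy, h⟩
        · exact Or.inl ⟨x, hx, y, hy, h⟩
        · exact Or.inr ⟨x, hx, y, hy, h⟩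
      · rintro (⟨x, hx, y, hy, h⟩ | ⟨x, hx, y, hy, h⟩)
        · exact ⟨x, Or.inl hx, y, hy, h⟩
        · exact ⟨x, Or.inr hx, y, hy, h⟩
    · intro X
      ext z
      simp only [memScomp, Set.mem_singleton_iff]
      constructor
      · rintro ⟨x, hx, y, rfl, h⟩
        rwa [← (rid x z).mp h]
      · intro hz
        exact ⟨z, hz, z0, rfl, (rid z z).mpr rfl⟩
    · intro X
      ext z
      constructor
      · rintro ⟨_, ⟨a, ha, rfl⟩, rfl⟩
        rwa [p4]
      · intro hz
        exact ⟨s z, ⟨z, hz, rfl⟩, p4 z⟩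
    · intro X Y
      exact Set.image_union s X Y
    · intro X Y
      ext z
      constructor
      · rintro ⟨c, ⟨x, hx, y, hy, h⟩, rfl⟩
        exact ⟨s y, ⟨y, hy, rfl⟩, s x, ⟨x, hx, rfl⟩, (convIff x y c).mp h⟩
      · rintro ⟨_, ⟨y, hy, rfl⟩, _, ⟨x, hx, rfl⟩, h⟩
        refine ⟨s z, ⟨x, hx, y, hy, ?_⟩, p4 z⟩
        have : R (s y) (s x) (s (s z)) := by rwa [p4]
        exact (convIff x y (s z)).mpr this
    · intro X Y z hz hzY
      obtain ⟨_, ⟨a, ha, rfl⟩, w, hw, h⟩ := hz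
      exact hw ⟨a, ha, z, hzY, peirce a w z h⟩
    · intro X Y Z
      ext d
      simp only [memScomp]
      constructor
      · rintro ⟨x, hx, u, ⟨y, hy, c, hc, h1⟩, h2⟩
        obtain ⟨v, hv1, hv2⟩ := (p2 y c x d).mp ⟨u, h1, (comm x u d).mp h2⟩
        exact ⟨v, ⟨x, hx, y, hy, (comm y x v).mp hv1⟩, c, hc, hv2⟩
      · rintro ⟨v, ⟨x, hx, y, hy, h1⟩, c, hc, h2⟩
        obtain ⟨u, hu1, hu2⟩ := (p2 y x c d).mp ⟨v, (comm x y v).mp h1, h2⟩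
        exact ⟨x, hx, u, ⟨y, hy, c, hc, hu1⟩, (comm u x d).mp hu2⟩
    · intro X z hz
      exact ⟨z, hz, z, hz, p3 z⟩
    · intro X Y
      ext z
      simp only [memScomp]
      constructor
      · rintro ⟨x, hx, y, hy, h⟩
        exact ⟨y, hy, x, hx, (comm x y z).mp h⟩
      · rintro ⟨y, hy, x, hx, h⟩
        exact ⟨x, hx, y, hy, (comm y x z).mp h⟩
  · rintro ⟨⟨ra1, ra2, ra3, ra4, ra5, ra6, ra7⟩, dens, commS⟩
    have p4' : ∀ a : K, s (s a) = a := by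
      intro a
      have h := ra3 {a}
      rw [sconvSingle, sconvSingle] at h
      exact Set.singleton_eq_singleton_iff.mp h
    have sinj : Function.Injective s := by
      intro a b h
      have := congrArg s h
      rwa [p4', p4'] at this
    have comm : ∀ a b c : K, R a b c ↔ R b a c := by
      intro a b c
      have h := commS {a} {b}
      constructor
      · intro hr
        exact (memSingle b a c).mp (h ▸ (memSingle a b c).mpr hr)
      · intro hr
        exact (memSingle a b c).mp (h ▸ (memSingle b a c).mpr hr)
    have p3 : ∀ a : K, R a a a := by
      intro a
      exact (memSingle a a a).mp (dens {a} rfl)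
    have rid : ∀ a b : K, R a z0 b ↔ a = b := by
      intro a b
      have h := ra2 {a}
      constructor
      · intro hr
        have : b ∈ scomp R {a} {z0} := (memSingle a z0 b).mpr hr
        rw [h] at this
        exact this.symm
      · rintro rfl
        have ha : a ∈ ({a} : Set K) := rfl
        rw [← h] at ha
        exact (memSingle a z0 a).mp ha
    have p1 : ∀ a b : K, R z0 a b ↔ a = b := by
      intro a b
      rw [comm z0 a b, rid a b]
    have memL : ∀ a b c d : K, d ∈ scomp R (scomp R {a} {b}) {c} ↔ ∃ x, R a b x ∧ R x c d := by
      intro a b c d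
      constructor
      · rintro ⟨x, hx, y, rfl, h⟩
        exact ⟨x, (memSingle a b x).mp hx, h⟩
      · rintro ⟨x, h1, h2⟩
        exact ⟨x, (memSingle a b x).mpr h1, c, rfl, h2⟩
    have p2 : ∀ a b c d : K, (∃ x, R a b x ∧ R x c d) ↔ (∃ y, R a c y ∧ R y b d) := by
      intro a b c d
      have key : scomp R (scomp R {a} {b}) {c} = scomp R (scomp R {a} {c}) {b} := by
        rw [← ra7, ← ra7, commS {b} {c}]
      rw [← memL a b c d, ← memL a c b d, key]
    have convIff : ∀ a b c : K, R a b c ↔ R (s b) (s a) (s c) := by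
      intro a b c
      have h := ra5 {a} {b}
      rw [sconvSingle, sconvSingle] at h
      constructor
      · intro hr
        have : s c ∈ sconv s (scomp R {a} {b}) := ⟨c, (memSingle a b c).mpr hr, rfl⟩
        rw [h] at this
        exact (memSingle (s b) (s a) (s c)).mp this
      · intro hr
        have : s c ∈ scomp R {s b} {s a} := (memSingle (s b) (s a) (s c)).mpr hr
        rw [← h] at this
        obtain ⟨u, hu, hus⟩ := this
        rw [← sinj hus]
        exact (memSingle a b u).mp hu
    have peirce : ∀ a w b : K, R (s a) w b → R a b w := by
      intro a w b h
      by_contra hn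
      have hb : b ∈ scomp R (sconv s {a}) (scomp R {a} {b})ᶜ := by
        refine ⟨s a, ⟨a, rfl, rfl⟩, w, ?_, h⟩
        intro hw
        exact hn ((memSingle a b w).mp hw)
      exact ra6 {a} {b} hb rfl
    have lr : LeftRefl R s := by
      intro x y z h
      exact peirce (s x) y z (by rwa [p4'])
    have p5 : ∀ a b c : K, R a b c ↔ R a (s c) (s b) := by
      intro a b c
      have fwd : ∀ a b c : K, R a b c → R a (s c) (s b) := by
        intro a b c h
        have h1 := lr a b c h
        have h2 := (comm (s a) c b).mp h1
        have h3 := (convIff c (s a) b).mp h2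
        rwa [p4'] at h3
      constructor
      · exact fwd a b c
      · intro h
        have := fwd a (s c) (s b) h
        rwa [p4', p4'] at this
    exact ⟨⟨p1, p2, p3, p4', p5⟩, lr⟩
end

section
/- Let 𝔎 = (K, R, ⋆, {0}) be a frame whose identity set is the singleton {0}. Then 𝔎 is a KR-frame if and only if Cm(𝔎) is a dense symmetric relation algebra. -/
/-- `(K, R, ⋆, {z0})` is a KR-frame: a CR-frame in which `⋆` is the identity. -/
def KRFrame {K : Type*} (R : K → K → K → Prop) (s : K → K) (z0 : K) : Prop :=
  CRFrame R s z0 ∧ ∀ a : K, s a = a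

/-- Theorem thm8a(ii): a frame with identity set `{z0}` is a KR-frame iff
its complex algebra is a dense symmetric relation algebra. -/
theorem krframe_iff_dense_symm_RA {K : Type*} (R : K → K → K → Prop)
    (s : K → K) (z0 : K) :
    KRFrame R s z0 ↔
      (CmRA R s ({z0} : Set K) ∧
        (∀ X : Set K, X ⊆ scomp R X X) ∧
        (∀ X : Set K, sconv s X = X)) := by
  constructor
  · rintro ⟨⟨p1, p2, p3, _p4, p5⟩, hs⟩
    have hsid : s = id := funext hs
    have p5' : ∀ a b c, R a b c ↔ R a c b := by
      intro a b c; simpa [hs] using p5 a b c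
    have comm : ∀ a b c, R a b c ↔ R b a c := by
      intro a b c
      have h := p2 z0 a b c
      constructor
      · intro hr
        obtain ⟨y, hy1, hy2⟩ := h.mp ⟨a, (p1 a a).mpr rfl, hr⟩
        have : b = y := (p1 b y).mp hy1
        rwa [this]
      · intro hr
        obtain ⟨y, hy1, hy2⟩ := h.mpr ⟨b, (p1 b b).mpr rfl, hr⟩
        have : a = y := (p1 a y).mp hy1
        rwa [this]
    have rid : ∀ a b, R a z0 b ↔ a = b := fun a b => (comm a z0 b).trans (p1 a b)
    have symm : ∀ X : Set K, sconv s X = X := by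
      intro X; simp [sconv, hsid]
    have commS : ∀ X Y : Set K, scomp R X Y = scomp R Y X := by
      intro X Y
      ext z
      simp only [scomp, Set.mem_setOf_eq]
      constructor
      · rintro ⟨x, hx, y, hy, h⟩; exact ⟨y, hy, x, hx, (comm x y z).mp h⟩
      · rintro ⟨x, hx, y, hy, h⟩; exact ⟨y, hy, x, hx, (comm x y z).mp h⟩
    refine ⟨⟨?_, ?_, ?_, ?_, ?_, ?_, ?_⟩, ?_, symm⟩
    · intro X Y Z
      ext z
      simp only [scomp, Set.mem_setOf_eq, Set.mem_union]
      constructor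
      · rintro ⟨x, hx | hx, y, hy, h⟩
        · exact Or.inl ⟨x, hx, y, hy, h⟩
        · exact Or.inr ⟨x, hx, y, hy, h⟩
      · rintro (⟨x, hx, y, hy, h⟩ | ⟨x, hx, y, hy, h⟩)
        · exact ⟨x, Or.inl hx, y, hy, h⟩
        · exact ⟨x, Or.inr hx, y, hy, h⟩
    · intro X
      ext z
      simp only [scomp, Set.mem_setOf_eq, Set.mem_singleton_iff]
      constructor
      · rintro ⟨x, hx, y, rfl, h⟩
        rwa [← (rid x z).mp h]
      · intro hz
        exact ⟨z, hz, z0, rfl, (rid z z).mpr rfl⟩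
    · intro X; rw [symm, symm]
    · intro X Y; simp [sconv, Set.image_union]
    · intro X Y
      rw [symm, symm, symm, commS]
    · intro X Y z hz hzY
      obtain ⟨x, hx, w, hw, hR⟩ := hz
      rw [symm] at hx
      exact hw ⟨x, hx, z, hzY, (p5' x w z).mp hR⟩
    · intro X Y Z
      ext d
      simp only [scomp, Set.mem_setOf_eq]
      constructor
      · rintro ⟨x, hx, w, ⟨y, hy, u, hu, hyu⟩, hR⟩
        have h1 : R w x d := (comm x w d).mp hR
        obtain ⟨v, hv1, hv2⟩ := (p2 y u x d).mp ⟨w, hyu, h1⟩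
        exact ⟨v, ⟨x, hx, y, hy, (comm y x v).mp hv1⟩, u, hu, hv2⟩
      · rintro ⟨v, ⟨x, hx, y, hy, hxy⟩, u, hu, hR⟩
        obtain ⟨w, hw1, hw2⟩ := (p2 y x u d).mp ⟨v, (comm x y v).mp hxy, hR⟩
        exact ⟨x, hx, w, ⟨y, hy, u, hu, hw1⟩, (comm w x d).mp hw2⟩
    · intro X z hz
      exact ⟨z, hz, z, hz, p3 z⟩
  · rintro ⟨⟨_dist, rid, _cc, _cu, convcomp, six, assoc⟩, dense, symm⟩
    have hs : ∀ a, s a = a := by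
      intro a
      have h := symm {a}
      have : s a ∈ sconv s {a} := Set.mem_image_of_mem s rfl
      rw [h] at this
      exact this
    have commS : ∀ X Y : Set K, scomp R X Y = scomp R Y X := by
      intro X Y
      have h := convcomp X Y
      rwa [symm, symm, symm] at h
    have comm : ∀ a b c, R a b c ↔ R b a c := by
      intro a b c
      have h := commS {a} {b}
      have h' : c ∈ scomp R {a} {b} ↔ c ∈ scomp R {b} {a} := by rw [h]
      simpa [scomp] using h'
    have rid' : ∀ a b, R a z0 b ↔ a = b := by
      intro a b
      have h := rid {a}
      have h' : b ∈ scomp R {a} {z0} ↔ b ∈ ({a} : Set K) := by rw [h]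
      simpa [scomp, eq_comm] using h'
    have p5 : ∀ a b c, R a b c → R a c b := by
      intro a b c hR
      by_contra hn
      have hb : b ∈ (scomp R {a} {c})ᶜ := by
        intro hb
        obtain ⟨x, rfl, y, rfl, h⟩ := hb
        exact hn h
      have : c ∈ ({c} : Set K)ᶜ := by
        apply six {a} {c}
        refine ⟨a, ?_, b, hb, hR⟩
        rw [symm]; rfl
      exact this rfl
    refine ⟨⟨?_, ?_, ?_, ?_, ?_⟩, hs⟩
    · intro a b
      exact (comm z0 a b).trans (rid' a b)
    · intro a b c d
      have h1 : scomp R (scomp R {a} {b}) {c} = scomp R (scomp R {a} {c}) {b} := by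
        rw [← assoc, commS {b} {c}, assoc]
      have h2 : d ∈ scomp R (scomp R {a} {b}) {c} ↔ d ∈ scomp R (scomp R {a} {c}) {b} := by
        rw [h1]
      simpa [scomp] using h2
    · intro a
      have := dense {a} rfl
      obtain ⟨x, rfl, y, rfl, h⟩ := this
      exact h
    · intro a; rw [hs, hs]
    · intro a b c
      rw [hs, hs]
      exact ⟨p5 a b c, p5 a c b⟩
end

section
/- Let K₄ = (K, R, ⋆, {0}) be the frame with K = {0, a, b} (three distinct elements), ⋆0 = 0, ⋆a = b, ⋆b = a, and R consisting exactly of the triples (x, y, z) with z ∈ x·y, where 0·x = x·0 = {x} for each x ∈ K, a·a = {a, b}, a·b = {0, a, b}, b·a = {0, a, b}, and b·b = {b}. Then: (1) K₄ is a CR-frame; (2) K₄ does not satisfy (left reflection), since (a, a, b) ∈ R but (b, b, a) ∉ R; (3) in Cm(K₄) the law (X;Y)⌣ = Y⌣;X⌣ fails, since ({a};{a})⌣ = {a, b} while ({a}⌣);({a}⌣) = {b}, so Cm(K₄) is not a semi-associative relation algebra; (4) the predicate (reflection1) is not valid in K₄: for A = B = {a} and C = D = {b}, the set K ∖ ((F(A,B,C,D))⌣;(K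 ∖ G(A,B,C,D))) is empty and hence does not include {0}. -/
/-- The complex algebra of the frame `(K, R, ⋆, I)` is a semi-associative
relation algebra. -/
def CmSA {K : Type*} (R : K → K → K → Prop) (s : K → K) (I : Set K) : Prop :=
  (∀ X Y Z : Set K, scomp R (X ∪ Y) Z = scomp R X Z ∪ scomp R Y Z) ∧
  (∀ X : Set K, scomp R X I = X) ∧
  (∀ X : Set K, sconv s (sconv s X) = X) ∧
  (∀ X Y : Set K, sconv s (X ∪ Y) = sconv s X ∪ sconv s Y) ∧
  (∀ X Y : Set K, sconv s (scomp R X Y) = scomp R (sconv s Y) (sconv s X)) ∧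
  (∀ X Y : Set K, scomp R (sconv s X) (scomp R X Y)ᶜ ⊆ Yᶜ) ∧
  (∀ X Y : Set K, scomp R X (scomp R Y Set.univ) = scomp R (scomp R X Y) Set.univ)

/-- Validity of the predicate (reflection1) in the frame `(K, R, ⋆, I)`. -/
def Refl1Valid {K : Type*} (R : K → K → K → Prop) (s : K → K) (I : Set K) : Prop :=
  ∀ A B C D : Set K,
    I ⊆ (scomp R (sconv s (scomp R A B ∩ C))
          (scomp R (A ∩ (sconv s D)ᶜ) B ∪ scomp R A (B ∩ scomp R D C))ᶜ)ᶜ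

/-- The three-element carrier `{0, a, b}` of the frame `K₄`. -/
inductive K4 : Type
  | zero : K4
  | a : K4
  | b : K4

/-- The involution of the frame `K₄`: `⋆0 = 0`, `⋆a = b`, `⋆b = a`. -/
def star4 : K4 → K4
  | K4.zero => K4.zero
  | K4.a => K4.b
  | K4.b => K4.a

/-- The multiplication table of the frame `K₄`. -/
def mul4 : K4 → K4 → Set K4
  | K4.zero, x => {x}
  | x, K4.zero => {x}
  | K4.a, K4.a => {K4.a, K4.b}
  | K4.a, K4.b => {K4.zero, K4.a, K4.b}
  | K4.b, K4.a => {K4.zero, K4.a, K4.b}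
  | K4.b, K4.b => {K4.b}

/-- The ternary relation of the frame `K₄`: `R x y z ↔ z ∈ x·y`. -/
def R4 (x y z : K4) : Prop := z ∈ mul4 x y

/-- The set `F = ({a};{a}) ∩ {b}` used in the counterexample. -/
def Fset : Set K4 := scomp R4 {K4.a} {K4.a} ∩ {K4.b}

/-- The set `G = (({a} ∩ ({b}⌣)ᶜ);{a}) ∪ ({a};({a} ∩ ({b};{b})))`
used in the counterexample. -/
def Gset : Set K4 :=
  scomp R4 ({K4.a} ∩ (sconv star4 ({K4.b} : Set K4))ᶜ) ({K4.a} : Set K4) ∪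
    scomp R4 {K4.a} ({K4.a} ∩ scomp R4 {K4.b} {K4.b})

deriving instance DecidableEq for K4

instance : Fintype K4 := ⟨⟨{.zero, .a, .b}, by decide⟩, by intro x; cases x <;> decide⟩

/-- Boolean version of `R4`. -/
def r4b : K4 → K4 → K4 → Bool
  | K4.zero, x, z => z = x
  | x, K4.zero, z => z = x
  | K4.a, K4.a, z => z = K4.a || z = K4.b
  | K4.a, K4.b, _ => true
  | K4.b, K4.a, _ => true
  | K4.b, K4.b, z => z = K4.b

lemma r4b_iff (x y z : K4) : R4 x y z ↔ r4b x y z = true := by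
  cases x <;> cases y <;> cases z <;>
    simp [R4, mul4, r4b, Set.mem_insert_iff, Set.mem_singleton_iff]

instance (x y z : K4) : Decidable (R4 x y z) := decidable_of_iff _ (r4b_iff x y z).symm

lemma Gset_empty : Gset = ∅ := by
  ext z
  simp only [Gset, scomp, sconv, Set.mem_union, Set.mem_setOf_eq, Set.mem_inter_iff,
    Set.mem_compl_iff, Set.mem_singleton_iff, Set.mem_image, Set.mem_empty_iff_false,
    iff_false, not_or]
  constructor
  · rintro ⟨x, ⟨rfl, hx⟩, -⟩
    exact hx ⟨K4.b, rfl, rfl⟩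
  · rintro ⟨x, rfl, y, ⟨rfl, w, rfl, hw⟩, -⟩
    exact absurd hw (by decide)

lemma Fconv_a : sconv star4 Fset = ({K4.a} : Set K4) := by
  ext z
  simp only [Fset, sconv, scomp, Set.mem_image, Set.mem_inter_iff, Set.mem_setOf_eq,
    Set.mem_singleton_iff]
  constructor
  · rintro ⟨x, ⟨-, rfl⟩, rfl⟩; rfl
  · rintro rfl
    exact ⟨K4.b, ⟨⟨K4.a, rfl, K4.a, rfl, by decide⟩, rfl⟩, rfl⟩

lemma scomp_full : (scomp R4 (sconv star4 Fset) Gsetᶜ)ᶜ = (∅ : Set K4) := by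
  rw [Fconv_a, Gset_empty]
  ext z
  simp only [Set.mem_compl_iff, Set.mem_empty_iff_false, iff_false, not_not, scomp,
    Set.mem_setOf_eq, Set.mem_singleton_iff]
  cases z with
  | zero => exact ⟨K4.a, rfl, K4.b, by simp, by decide⟩
  | a => exact ⟨K4.a, rfl, K4.a, by simp, by decide⟩
  | b => exact ⟨K4.a, rfl, K4.a, by simp, by decide⟩

lemma conv_aa : sconv star4 (scomp R4 {K4.a} {K4.a}) = ({K4.a, K4.b} : Set K4) := by
  ext z
  simp only [sconv, scomp, Set.mem_image, Set.mem_setOf_eq, Set.mem_singleton_iff,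
    Set.mem_insert_iff]
  constructor
  · rintro ⟨x, ⟨a, rfl, b, rfl, hx⟩, rfl⟩
    revert hx; cases x <;> decide
  · rintro (rfl | rfl)
    · exact ⟨K4.b, ⟨K4.a, rfl, K4.a, rfl, by decide⟩, rfl⟩
    · exact ⟨K4.a, ⟨K4.a, rfl, K4.a, rfl, by decide⟩, rfl⟩

lemma conv_comp : scomp R4 (sconv star4 ({K4.a} : Set K4)) (sconv star4 ({K4.a} : Set K4)) =
    ({K4.b} : Set K4) := by
  ext z
  simp only [scomp, sconv, Set.image_singleton, Set.mem_setOf_eq, Set.mem_singleton_iff]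
  constructor
  · rintro ⟨x, rfl, y, rfl, h⟩
    revert h; cases z <;> decide
  · rintro rfl
    exact ⟨K4.b, rfl, K4.b, rfl, by decide⟩

/-- Theorem: `K₄` is a CR-frame; it does not satisfy (left reflection), as
witnessed by `(a,a,b) ∈ R` with `(b,b,a) ∉ R`; in its complex algebra the law
`(X;Y)⌣ = Y⌣;X⌣` fails (with `({a};{a})⌣ = {a,b}` but `{a}⌣;{a}⌣ = {b}`), so
the complex algebra is not a semi-associative relation algebra; and the
predicate (reflection1) is not valid in `K₄`: for `A = B = {a}` and
`C = D = {b}` the set `K ∖ (F⌣ ; (K ∖ G))` is empty, hence does not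
include `{0}`. -/

theorem K4_counterexample :
    CRFrame R4 star4 K4.zero ∧
    (R4 K4.a K4.a K4.b ∧ ¬ R4 K4.b K4.b K4.a ∧ ¬ LeftRefl R4 star4) ∧
    (sconv star4 (scomp R4 {K4.a} {K4.a}) = ({K4.a, K4.b} : Set K4) ∧
      scomp R4 (sconv star4 ({K4.a} : Set K4)) (sconv star4 ({K4.a} : Set K4)) =
        ({K4.b} : Set K4) ∧
      ¬ (∀ X Y : Set K4,
          sconv star4 (scomp R4 X Y) = scomp R4 (sconv star4 Y) (sconv star4 X)) ∧
      ¬ CmSA R4 star4 ({K4.zero} : Set K4)) ∧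
    (¬ Refl1Valid R4 star4 {K4.zero} ∧
      (scomp R4 (sconv star4 Fset) Gsetᶜ)ᶜ = (∅ : Set K4) ∧
      ¬ ({K4.zero} : Set K4) ⊆ (scomp R4 (sconv star4 Fset) Gsetᶜ)ᶜ) := by

  refine ⟨by unfold CRFrame; decide, ⟨by decide, by decide, fun h => absurd (h K4.a K4.a K4.b (by decide)) (by decide)⟩, ⟨conv_aa, conv_comp, ?_, ?_⟩, ⟨?_, scomp_full, ?_⟩⟩
  · intro h
    have h2 := (h {K4.a} {K4.a}).symm.trans conv_aa
    rw [conv_comp] at h2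
    have : K4.a ∈ ({K4.b} : Set K4) := h2.symm ▸ (by simp : K4.a ∈ ({K4.a, K4.b} : Set K4))
    simp at this
  · intro h
    have h2 := (h.2.2.2.2.1 {K4.a} {K4.a}).symm.trans conv_aa
    rw [conv_comp] at h2
    have : K4.a ∈ ({K4.b} : Set K4) := h2.symm ▸ (by simp : K4.a ∈ ({K4.a, K4.b} : Set K4))
    simp at this
  · intro h
    have h2 := h {K4.a} {K4.a} {K4.b} {K4.b} (Set.mem_singleton K4.zero)
    rw [show (scomp R4 {K4.a} {K4.a} ∩ {K4.b}) = Fset from rfl] at h2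
    have : K4.zero ∈ (scomp R4 (sconv star4 Fset) Gsetᶜ)ᶜ := h2
    rw [scomp_full] at this
    exact this
  · intro h
    have := h (Set.mem_singleton K4.zero)
    rw [scomp_full] at this
    exact this
end

section
/- Let K₁ = (K, R, ⋆, {0}) be the frame with K = {0, a, b, c} (four distinct elements), ⋆x = x for all x ∈ K, and R consisting exactly of the triples (x, y, z) with z ∈ x·y, where 0·x = x·0 = {x} for each x ∈ K, a·a = {0, a}, b·b = {0, b}, c·c = {0, c}, a·b = b·a = {c}, a·c = c·a = {b}, and b·c = c·b = {a}. Then K₁ satisfies (left reflection), (right reflection), (identity), (semi-Pasch), (dense), and (symm), but K₁ does not satisfy (Pasch); moreover in Cm(K₁) composition is not associative: ({a};{a});{b} = {b, c} while {a};({a};{b}) = {b}. Hence Cm(K₁) is a dense symmetric semi-associative relation algebra that is not a relation algebra. -/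
/-- The four-element carrier `{0, a, b, c}` of the frame `K₁`. -/
inductive K1 : Type
  | zero : K1
  | a : K1
  | b : K1
  | c : K1

/-- The multiplication table of the frame `K₁`. -/
def mul1 : K1 → K1 → Set K1
  | K1.zero, x => {x}
  | x, K1.zero => {x}
  | K1.a, K1.a => {K1.zero, K1.a}
  | K1.b, K1.b => {K1.zero, K1.b}
  | K1.c, K1.c => {K1.zero, K1.c}
  | K1.a, K1.b => {K1.c}
  | K1.b, K1.a => {K1.c}
  | K1.a, K1.c => {K1.b}
  | K1.c, K1.a => {K1.b}
  | K1.b, K1.c => {K1.a}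
  | K1.c, K1.b => {K1.a}

/-- The ternary relation of the frame `K₁`: `R x y z ↔ z ∈ x·y`. -/
def R1 (x y z : K1) : Prop := z ∈ mul1 x y

def K1.toFin : K1 → Fin 4
  | K1.zero => 0
  | K1.a => 1
  | K1.b => 2
  | K1.c => 3

instance : DecidableEq K1 := fun x y =>
  decidable_of_iff (x.toFin = y.toFin) (by cases x <;> cases y <;> simp [K1.toFin])

instance : Fintype K1 :=
  ⟨⟨↑[K1.zero, K1.a, K1.b, K1.c], by decide⟩, fun x => by cases x <;> decide⟩

/-- Boolean version of `R1`. -/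
def R1b : K1 → K1 → K1 → Bool
  | K1.zero, x, z => z == x
  | x, K1.zero, z => z == x
  | K1.a, K1.a, z => z == K1.zero || z == K1.a
  | K1.b, K1.b, z => z == K1.zero || z == K1.b
  | K1.c, K1.c, z => z == K1.zero || z == K1.c
  | K1.a, K1.b, z => z == K1.c
  | K1.b, K1.a, z => z == K1.c
  | K1.a, K1.c, z => z == K1.b
  | K1.c, K1.a, z => z == K1.b
  | K1.b, K1.c, z => z == K1.a
  | K1.c, K1.b, z => z == K1.a

lemma R1_iff_R1b (x y z : K1) : R1 x y z ↔ R1b x y z = true := by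
  cases x <;> cases y <;> cases z <;>
    simp [R1, R1b, mul1, Set.mem_insert_iff, Set.mem_singleton_iff]

instance (x y z : K1) : Decidable (R1 x y z) :=
  decidable_of_iff _ (R1_iff_R1b x y z).symm

lemma R1_left : ∀ x y z : K1, R1 x y z → R1 x z y := by decide
lemma R1_right : ∀ x y z : K1, R1 x y z → R1 z y x := by decide
lemma R1_comm : ∀ x y z : K1, R1 x y z ↔ R1 y x z := by decide
lemma R1_zero : ∀ x z : K1, R1 x K1.zero z ↔ z = x := by decide
lemma R1_dense : ∀ x : K1, R1 x x x := by decide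
lemma R1_surj : ∀ y z : K1, ∃ w, R1 y w z := by decide
lemma R1_total : ∀ x y : K1, ∃ z, R1 x y z := by decide

lemma scomp_empty_left (Z : Set K1) : scomp R1 ∅ Z = ∅ := by ext z; simp [scomp]
lemma scomp_empty_right (X : Set K1) : scomp R1 X ∅ = ∅ := by ext z; simp [scomp]

lemma scomp_univ (X : Set K1) (hX : X.Nonempty) : scomp R1 X Set.univ = Set.univ := by
  ext z
  simp only [Set.mem_univ, iff_true, scomp, Set.mem_setOf_eq]
  obtain ⟨x, hx⟩ := hX
  obtain ⟨w, hw⟩ := R1_surj x z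
  exact ⟨x, hx, w, trivial, hw⟩

/-- Theorem: the frame `K₁` (with `⋆ = id` and identity set `{0}`) satisfies
(left reflection), (right reflection), (identity), (semi-Pasch), (dense), and
(symm), but not (Pasch); composition in its complex algebra is not associative
(`({a};{a});{b} = {b,c}` while `{a};({a};{b}) = {b}`); hence the complex
algebra is a dense symmetric semi-associative relation algebra that is not a
relation algebra. -/
theorem K1_counterexample :
    ((∀ x y z : K1, R1 x y z → R1 (id x) z y) ∧
     (∀ x y z : K1, R1 x y z → R1 z (id y) x) ∧
     (∀ x y : K1, x = y ↔ ∃ u, u ∈ ({K1.zero} : Set K1) ∧ R1 x u y) ∧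
     (∀ v w y z : K1, (∃ x, R1 v w x ∧ R1 x y z) → ∃ u, R1 v u z) ∧
     (∀ x : K1, R1 x x x) ∧
     (∀ x : K1, id x = x)) ∧
    ¬ (∀ v w y z : K1, (∃ x, R1 v w x ∧ R1 x y z) →
        ∃ u, R1 v u z ∧ R1 w y u) ∧
    (scomp R1 (scomp R1 {K1.a} {K1.a}) {K1.b} = ({K1.b, K1.c} : Set K1) ∧
     scomp R1 {K1.a} (scomp R1 {K1.a} {K1.b}) = ({K1.b} : Set K1)) ∧
    (CmSA R1 id ({K1.zero} : Set K1) ∧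
     (∀ X : Set K1, X ⊆ scomp R1 X X) ∧
     (∀ X : Set K1, sconv id X = X) ∧
     ¬ (∀ X Y Z : Set K1,
        scomp R1 X (scomp R1 Y Z) = scomp R1 (scomp R1 X Y) Z)) := by
  refine ⟨⟨fun x y z h => R1_left x y z h, fun x y z h => R1_right x y z h,
      ?_, ?_, R1_dense, fun _ => rfl⟩, ?_, ⟨?_, ?_⟩, ?_, ?_, ?_, ?_⟩
  · intro x y
    constructor
    · rintro rfl; exact ⟨K1.zero, rfl, (R1_zero x x).mpr rfl⟩
    · rintro ⟨u, hu, h⟩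
      rw [Set.mem_singleton_iff] at hu; subst hu
      exact ((R1_zero x y).mp h).symm
  · rintro v w y z ⟨x, h1, h2⟩
    exact R1_surj v z
  · decide
  · ext z
    simp only [scomp, Set.mem_setOf_eq, Set.mem_singleton_iff]
    cases z <;> simp [Set.mem_insert_iff, Set.mem_singleton_iff] <;> decide
  · ext z
    simp only [scomp, Set.mem_setOf_eq, Set.mem_singleton_iff]
    cases z <;> simp [Set.mem_insert_iff, Set.mem_singleton_iff] <;> decide
  · refine ⟨?_, ?_, ?_, ?_, ?_, ?_, ?_⟩
    · intro X Y Z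
      ext z
      simp only [scomp, Set.mem_setOf_eq, Set.mem_union]
      constructor
      · rintro ⟨x, hx | hx, y, hy, h⟩
        · exact Or.inl ⟨x, hx, y, hy, h⟩
        · exact Or.inr ⟨x, hx, y, hy, h⟩
      · rintro (⟨x, hx, y, hy, h⟩ | ⟨x, hx, y, hy, h⟩)
        exacts [⟨x, Or.inl hx, y, hy, h⟩, ⟨x, Or.inr hx, y, hy, h⟩]
    · intro X
      ext z
      simp only [scomp, Set.mem_setOf_eq, Set.mem_singleton_iff]
      constructor
      · rintro ⟨x, hx, y, rfl, h⟩
        rwa [(R1_zero x z).mp h]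
      · intro hz
        exact ⟨z, hz, K1.zero, rfl, (R1_zero z z).mpr rfl⟩
    · intro X; simp [sconv, Set.image_id]
    · intro X Y; simp [sconv, Set.image_union]
    · intro X Y
      simp only [sconv, Set.image_id]
      ext z
      simp only [scomp, Set.mem_setOf_eq]
      constructor
      · rintro ⟨x, hx, y, hy, h⟩; exact ⟨y, hy, x, hx, (R1_comm x y z).mp h⟩
      · rintro ⟨y, hy, x, hx, h⟩; exact ⟨x, hx, y, hy, (R1_comm y x z).mp h⟩
    · intro X Y
      simp only [sconv, Set.image_id]
      rintro z ⟨x, hx, w, hw, h⟩ hz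
      exact hw ⟨x, hx, z, hz, R1_left _ _ _ h⟩
    · intro X Y
      rcases X.eq_empty_or_nonempty with rfl | hX
      · rw [scomp_empty_left, scomp_empty_left, scomp_empty_left]
      · rcases Y.eq_empty_or_nonempty with rfl | hY
        · rw [scomp_empty_left, scomp_empty_right, scomp_empty_left]
        · have hXY : (scomp R1 X Y).Nonempty := by
            obtain ⟨x, hx⟩ := hX
            obtain ⟨y, hy⟩ := hY
            obtain ⟨z, hz⟩ := R1_total x y
            exact ⟨z, x, hx, y, hy, hz⟩
          rw [scomp_univ Y hY, scomp_univ X hX, scomp_univ _ hXY]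
  · intro X z hz
    exact ⟨z, hz, z, hz, R1_dense z⟩
  · intro X; simp [sconv, Set.image_id]
  · intro h
    have hc : K1.c ∈ scomp R1 (scomp R1 {K1.a} {K1.a}) {K1.b} :=
      ⟨K1.a, ⟨K1.a, rfl, K1.a, rfl, by decide⟩, K1.b, rfl, by decide⟩
    rw [← h {K1.a} {K1.a} {K1.b}] at hc
    obtain ⟨x, hx, y, ⟨x', hx', y', hy', h1⟩, h2⟩ := hc
    simp only [Set.mem_singleton_iff] at hx hx' hy'
    subst hx; subst hx'; subst hy'
    revert h1 h2
    generalize y = w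
    revert w
    decide
end
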